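/- With m machines, jobs J with processing times p_j > 0, cooling rates α_j < 0, heating rates β_j > 0, and single-job makespans q_j (equal to p_j(1-β_j/α_j)+1/α_j if p_jβ_j > 1, else p_j), the minimal makespan equals C_max = max( max_{j∈J} q_j, (Σ_{j∈J} p_j)/m ). Specifically, the schedule assigning each job constant rate s_j = p_j/C_max is feasible: s_j ≤ 1 for all j, Σ_j s_j ≤ m, and each job's final temperature α_j(C_max − p_j) + β_j p_j is at most 1. -/

import Mathlib

/-- on `m` machines, with single-job makespans `q j`, the minimal horizon
`C` admitting a feasible constant-rate schedule (each job's rate `p j / C ≤ 1`, total rate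
at most `m`, each final temperature `α j*(C - p j) + β j*p j ≤ 1`) equals
`max (max_j q_j) ((∑ p_j)/m)`. -/
theorem multi_machine_makespan {ι : Type*} (J : Finset ι) (hJ : J.Nonempty)
    (m : ℕ) (hm : 0 < m) (p α β q : ι → ℝ)
    (hp : ∀ j ∈ J, 0 < p j) (hα : ∀ j ∈ J, α j < 0) (hβ : ∀ j ∈ J, 0 < β j)
    (hq : ∀ j ∈ J, q j = if 1 < p j * β j then p j * (1 - β j / α j) + 1 / α j else p j) :
    IsLeast {C : ℝ | (∀ j ∈ J, p j ≤ C) ∧ (∑ j ∈ J, p j) ≤ m * C ∧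
        ∀ j ∈ J, α j * (C - p j) + β j * p j ≤ 1}
      (max (J.sup' hJ q) ((∑ j ∈ J, p j) / m)) := by
  have hm' : (0:ℝ) < m := Nat.cast_pos.mpr hm
  have hpq : ∀ j ∈ J, p j ≤ q j := by
    intro j hj
    rw [hq j hj]
    split_ifs with h
    · have hαj := hα j hj
      have key : p j * (1 - β j / α j) + 1 / α j = p j + (1 - p j * β j) / α j := by
        field_simp [hαj.ne]; ring
      have : 0 ≤ (1 - p j * β j) / α j := by
        rw [div_nonneg_iff]; right; constructor <;> linarith
      linarith
    · exact le_rfl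
  have hqtemp : ∀ j ∈ J, α j * (q j - p j) + β j * p j ≤ 1 := by
    intro j hj
    rw [hq j hj]
    split_ifs with h
    · have hαj := hα j hj
      have hαne : α j ≠ 0 := hαj.ne
      have : p j * (1 - β j / α j) + 1 / α j - p j = (1 - p j * β j) / α j := by
        field_simp; ring
      rw [this, mul_div_cancel₀ _ hαne]
      linarith [mul_comm (p j) (β j)]
    · push_neg at h
      have := hα j hj
      have := hpq j hj
      nlinarith [mul_comm (β j) (p j)]
  constructor
  · refine ⟨?_, ?_, ?_⟩
    · intro j hj
      exact le_trans (hpq j hj) (le_trans (Finset.le_sup' q hj) (le_max_left _ _))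
    · have h1 : (∑ j ∈ J, p j) / m ≤ max (J.sup' hJ q) ((∑ j ∈ J, p j) / m) :=
        le_max_right _ _
      calc (∑ j ∈ J, p j) = m * ((∑ j ∈ J, p j) / m) := by field_simp
        _ ≤ m * max (J.sup' hJ q) ((∑ j ∈ J, p j) / m) := by
            exact mul_le_mul_of_nonneg_left h1 hm'.le
    · intro j hj
      have hC : q j ≤ max (J.sup' hJ q) ((∑ j ∈ J, p j) / m) :=
        le_trans (Finset.le_sup' q hj) (le_max_left _ _)
      have := hqtemp j hj
      nlinarith [hα j hj]
  · rintro C ⟨h1, h2, h3⟩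
    apply max_le
    · apply Finset.sup'_le
      intro j hj
      rw [hq j hj]
      split_ifs with h
      · have hαj := hα j hj
        have key : p j * (1 - β j / α j) + 1 / α j = p j + (1 - p j * β j) / α j := by
          field_simp [hαj.ne]; ring
        rw [key]
        have htemp := h3 j hj
        have hdiv : (1 - p j * β j) / α j ≤ C - p j := by
          rw [div_le_iff_of_neg hαj]
          nlinarith [mul_comm (β j) (p j)]
        linarith
      · exact h1 j hj
    · rw [div_le_iff₀ hm']
      linarith [mul_comm C (m:ℝ)]
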